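/- Let Ω ⊂ ℝⁿ be a bounded measurable set, let Φ : ℝⁿ → [0,∞) be a differentiable n-dimensional N-function with Young conjugate Φ_•, and let V : Ω → ℝⁿ be measurable with ∫_Ω Φ(V/k) dx < ∞ for some k > 0. Then the supremum, over all measurable essentially bounded functions U : Ω → ℝⁿ, of the quantity ∫_Ω U(x) · V(x) dx − ∫_Ω Φ_•(U(x)) dx equals ∫_Ω Φ(V(x)) dx (as an equality in [0, +∞]). -/

import Mathlib

open MeasureTheory Filter Topology
open scoped RealInnerProductSpace ENNReal

/-- An `n`-dimensional (finite-valued) Young function: an even, convex function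
`Φ : ℝⁿ → [0,∞)` with `Φ(0) = 0` such that for every `t > 0` the sublevel set
`{ξ : Φ ξ < t}` is bounded and is a neighborhood of `0`. -/
structure IsYoungFunction {n : ℕ} (Φ : EuclideanSpace ℝ (Fin n) → ℝ) : Prop where
  nonneg : ∀ ξ, 0 ≤ Φ ξ
  even : ∀ ξ, Φ (-ξ) = Φ ξ
  convex : ConvexOn ℝ Set.univ Φ
  map_zero : Φ 0 = 0
  sublevel_bounded : ∀ t > 0, Bornology.IsBounded {ξ | Φ ξ < t}
  sublevel_mem_nhds : ∀ t > 0, {ξ | Φ ξ < t} ∈ 𝓝 (0 : EuclideanSpace ℝ (Fin n))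

/-- An `n`-dimensional `N`-function: a finite-valued Young function vanishing only
at `0`, with `Φ(ξ)/|ξ| → ∞` as `|ξ| → ∞` and `Φ(ξ)/|ξ| → 0` as `|ξ| → 0`. -/
structure IsNFunction {n : ℕ} (Φ : EuclideanSpace ℝ (Fin n) → ℝ)
    extends IsYoungFunction Φ : Prop where
  eq_zero : ∀ ξ, Φ ξ = 0 → ξ = 0
  tendsto_atTop : Tendsto (fun ξ => Φ ξ / ‖ξ‖)
    (Bornology.cobounded (EuclideanSpace ℝ (Fin n))) atTop
  tendsto_zero : Tendsto (fun ξ => Φ ξ / ‖ξ‖)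
    (𝓝[≠] (0 : EuclideanSpace ℝ (Fin n))) (𝓝 0)

/-- The (real-valued) Young conjugate `Φ_•(η) = sup_ξ (ξ·η − Φ(ξ))`, which is a
finite real number whenever `Φ` is an `n`-dimensional `N`-function. -/
noncomputable def youngConjR {n : ℕ} (Φ : EuclideanSpace ℝ (Fin n) → ℝ)
    (η : EuclideanSpace ℝ (Fin n)) : ℝ :=
  ⨆ ξ : EuclideanSpace ℝ (Fin n), (⟪ξ, η⟫ - Φ ξ)

section Aux

variable {n : ℕ} {Φ : EuclideanSpace ℝ (Fin n) → ℝ}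

lemma IsNFunction.exists_superlinear (hΦ : IsNFunction Φ) (c : ℝ) :
    ∃ R : ℝ, 0 < R ∧ ∀ ξ : EuclideanSpace ℝ (Fin n), R ≤ ‖ξ‖ → c * ‖ξ‖ ≤ Φ ξ := by
  have h := hΦ.tendsto_atTop.eventually_ge_atTop c
  rw [Filter.hasBasis_cobounded_norm.eventually_iff] at h
  obtain ⟨R, -, hR⟩ := h
  refine ⟨max R 1, by positivity, fun ξ hξ => ?_⟩
  have h1 : (0:ℝ) < ‖ξ‖ := lt_of_lt_of_le one_pos ((le_max_right R 1).trans hξ)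
  have h2 := hR ((le_max_left R 1).trans hξ)
  exact (le_div_iff₀ h1).1 h2

lemma young_bound (hΦ : IsNFunction Φ) {b : ℝ} (hb : 0 ≤ b) :
    ∃ B : ℝ, 0 ≤ B ∧ ∀ ξ η : EuclideanSpace ℝ (Fin n), ‖η‖ ≤ b → ⟪ξ, η⟫ - Φ ξ ≤ B := by
  obtain ⟨R, hR0, hR⟩ := hΦ.exists_superlinear (b + 1)
  refine ⟨b * R, by positivity, fun ξ η hη => ?_⟩
  have hi : ⟪ξ, η⟫ ≤ ‖ξ‖ * b :=
    (real_inner_le_norm ξ η).trans (mul_le_mul_of_nonneg_left hη (norm_nonneg ξ))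
  rcases le_or_gt ‖ξ‖ R with h | h
  · have : ⟪ξ, η⟫ ≤ b * R := hi.trans (by nlinarith)
    linarith [hΦ.nonneg ξ]
  · have h2 := hR ξ h.le
    nlinarith [norm_nonneg ξ]

lemma young_bddAbove (hΦ : IsNFunction Φ) (η : EuclideanSpace ℝ (Fin n)) :
    BddAbove (Set.range fun ξ : EuclideanSpace ℝ (Fin n) => ⟪ξ, η⟫ - Φ ξ) := by
  obtain ⟨B, _, hB⟩ := young_bound hΦ (norm_nonneg η)
  exact ⟨B, by rintro _ ⟨ξ, rfl⟩; exact hB ξ η le_rfl⟩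

lemma le_young (hΦ : IsNFunction Φ) (ξ η : EuclideanSpace ℝ (Fin n)) :
    ⟪ξ, η⟫ - Φ ξ ≤ youngConjR Φ η :=
  le_ciSup (young_bddAbove hΦ η) ξ

lemma young_nonneg (hΦ : IsNFunction Φ) (η : EuclideanSpace ℝ (Fin n)) :
    0 ≤ youngConjR Φ η := by
  have := le_young hΦ 0 η
  simpa [hΦ.map_zero] using this

lemma young_zero (hΦ : IsNFunction Φ) : youngConjR Φ 0 = 0 := by
  refine le_antisymm (ciSup_le fun ξ => ?_) (young_nonneg hΦ 0)
  simpa using hΦ.nonneg ξ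

lemma young_le_of_norm_le (hΦ : IsNFunction Φ) {b B : ℝ}
    (hB : ∀ ξ η : EuclideanSpace ℝ (Fin n), ‖η‖ ≤ b → ⟪ξ, η⟫ - Φ ξ ≤ B)
    {η : EuclideanSpace ℝ (Fin n)} (hη : ‖η‖ ≤ b) : youngConjR Φ η ≤ B :=
  ciSup_le fun ξ => hB ξ η hη

lemma young_convexOn (hΦ : IsNFunction Φ) : ConvexOn ℝ Set.univ (youngConjR Φ) := by
  refine ⟨convex_univ, fun η₁ _ η₂ _ a b ha hb hab => ?_⟩
  refine ciSup_le fun ξ => ?_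
  have h1 := mul_le_mul_of_nonneg_left (le_young hΦ ξ η₁) ha
  have h2 := mul_le_mul_of_nonneg_left (le_young hΦ ξ η₂) hb
  have key : ⟪ξ, a • η₁ + b • η₂⟫ - Φ ξ
      = a * (⟪ξ, η₁⟫ - Φ ξ) + b * (⟪ξ, η₂⟫ - Φ ξ) := by
    rw [inner_add_right, real_inner_smul_right, real_inner_smul_right]
    linear_combination (Φ ξ) * hab
  rw [key]
  simpa [smul_eq_mul] using add_le_add h1 h2

lemma young_continuous (hΦ : IsNFunction Φ) : Continuous (youngConjR Φ) :=
  (young_convexOn hΦ).locallyLipschitz.continuous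

lemma grad_ineq (hΦ : IsNFunction Φ) (hdiff : Differentiable ℝ Φ)
    (ξ ζ : EuclideanSpace ℝ (Fin n)) :
    Φ ξ + fderiv ℝ Φ ξ (ζ - ξ) ≤ Φ ζ := by
  set g : ℝ → ℝ := fun t => Φ (ξ + t • (ζ - ξ)) with hg
  have hline : ∀ t : ℝ, HasDerivAt (fun s : ℝ => ξ + s • (ζ - ξ)) (ζ - ξ) t := fun t => by
    simpa using ((hasDerivAt_id t).smul_const (ζ - ξ)).const_add ξ
  have hgd : HasDerivAt g (fderiv ℝ Φ ξ (ζ - ξ)) 0 := by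
    have := (hdiff (ξ + (0:ℝ) • (ζ - ξ))).hasFDerivAt.comp_hasDerivAt 0 (hline 0)
    simpa [hg, Function.comp_def] using this
  have hg0 : g 0 = Φ ξ := by simp [hg]
  have hslope : ∀ t ∈ Set.Ioo (0:ℝ) 1, slope g 0 t ≤ Φ ζ - Φ ξ := by
    intro t ht
    have hconv := hΦ.convex.2 (Set.mem_univ ξ) (Set.mem_univ ζ)
      (by linarith [ht.2] : (0:ℝ) ≤ 1 - t) ht.1.le (by ring)
    have heq : (1 - t) • ξ + t • ζ = ξ + t • (ζ - ξ) := by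
      module
    rw [heq] at hconv
    have hgt : g t ≤ (1 - t) * Φ ξ + t * Φ ζ := hconv
    rw [slope_def_field, sub_zero, div_le_iff₀ ht.1, hg0]
    nlinarith
  have htend : Tendsto (slope g 0) (𝓝[>] 0) (𝓝 (fderiv ℝ Φ ξ (ζ - ξ))) :=
    (hasDerivAt_iff_tendsto_slope.1 hgd).mono_left
      (nhdsWithin_mono 0 (fun x hx => ne_of_gt hx))
  have hev : ∀ᶠ t in 𝓝[>] (0:ℝ), slope g 0 t ≤ Φ ζ - Φ ξ :=
    Filter.eventually_of_mem (Ioo_mem_nhdsGT_of_mem (by simp [Set.mem_Ico])) hslope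
  have := le_of_tendsto htend hev
  linarith

lemma grad_key (hΦ : IsNFunction Φ) (hdiff : Differentiable ℝ Φ)
    (ξ ζ : EuclideanSpace ℝ (Fin n)) :
    Φ ξ + ⟪(InnerProductSpace.toDual ℝ (EuclideanSpace ℝ (Fin n))).symm (fderiv ℝ Φ ξ), ζ - ξ⟫
      ≤ Φ ζ := by
  rw [InnerProductSpace.toDual_symm_apply]
  exact grad_ineq hΦ hdiff ξ ζ

lemma young_eq (hΦ : IsNFunction Φ) (hdiff : Differentiable ℝ Φ)
    (ξ : EuclideanSpace ℝ (Fin n)) :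
    youngConjR Φ ((InnerProductSpace.toDual ℝ (EuclideanSpace ℝ (Fin n))).symm (fderiv ℝ Φ ξ))
      = ⟪ξ, (InnerProductSpace.toDual ℝ (EuclideanSpace ℝ (Fin n))).symm (fderiv ℝ Φ ξ)⟫ - Φ ξ := by
  set G := (InnerProductSpace.toDual ℝ (EuclideanSpace ℝ (Fin n))).symm (fderiv ℝ Φ ξ) with hG
  refine le_antisymm (ciSup_le fun ζ => ?_) (le_young hΦ ξ G)
  have h := grad_key hΦ hdiff ξ ζ
  rw [← hG, inner_sub_right] at h
  have h1 : ⟪G, ζ⟫ = ⟪ζ, G⟫ := real_inner_comm _ _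
  have h2 : ⟪G, ξ⟫ = ⟪ξ, G⟫ := real_inner_comm _ _
  linarith

lemma grad_meas (hdiff : Differentiable ℝ Φ) :
    Measurable (fun ξ : EuclideanSpace ℝ (Fin n) =>
      (InnerProductSpace.toDual ℝ (EuclideanSpace ℝ (Fin n))).symm (fderiv ℝ Φ ξ)) :=
  ((InnerProductSpace.toDual ℝ (EuclideanSpace ℝ (Fin n))).symm.continuous.measurable).comp
    (measurable_fderiv ℝ Φ)

lemma grad_bound (hΦ : IsNFunction Φ) (hdiff : Differentiable ℝ Φ) (r : ℝ) :
    ∃ M : ℝ, 0 ≤ M ∧ ∀ ξ : EuclideanSpace ℝ (Fin n), ‖ξ‖ ≤ r →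
      ‖(InnerProductSpace.toDual ℝ (EuclideanSpace ℝ (Fin n))).symm (fderiv ℝ Φ ξ)‖ ≤ M := by
  obtain ⟨C, hC⟩ := (isCompact_closedBall (0 : EuclideanSpace ℝ (Fin n)) (r + 1)).exists_bound_of_continuousOn
    hdiff.continuous.continuousOn
  refine ⟨max C 0, le_max_right _ _, fun ξ hξ => ?_⟩
  set G := (InnerProductSpace.toDual ℝ (EuclideanSpace ℝ (Fin n))).symm (fderiv ℝ Φ ξ) with hG
  rcases eq_or_ne G 0 with h0 | h0
  · simp [h0]
  have hnorm : (0:ℝ) < ‖G‖ := norm_pos_iff.2 h0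
  set v := ‖G‖⁻¹ • G with hv
  have hvnorm : ‖v‖ = 1 := by
    rw [hv, norm_smul, norm_inv, norm_norm, inv_mul_cancel₀ hnorm.ne']
  have hmem : ξ + v ∈ Metric.closedBall (0 : EuclideanSpace ℝ (Fin n)) (r + 1) := by
    rw [Metric.mem_closedBall, dist_zero_right]
    calc ‖ξ + v‖ ≤ ‖ξ‖ + ‖v‖ := norm_add_le _ _
      _ ≤ r + 1 := by rw [hvnorm]; linarith
  have hkey := grad_key hΦ hdiff ξ (ξ + v)
  rw [add_sub_cancel_left, ← hG] at hkey
  have hGv : ⟪G, v⟫ = ‖G‖ := by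
    rw [hv, real_inner_smul_right, real_inner_self_eq_norm_sq, sq]
    field_simp
  have h1 : Φ (ξ + v) ≤ C := (le_abs_self _).trans (hC _ hmem)
  have h2 : 0 ≤ Φ ξ := hΦ.nonneg ξ
  have : ‖G‖ ≤ C := by rw [← hGv]; linarith
  exact this.trans (le_max_left _ _)

end Aux

/-- For a `C¹` `n`-dimensional `N`-function `Φ` and `V` in the Orlicz class on a
bounded measurable set `Ω`, the supremum over measurable essentially bounded
`U : Ω → ℝⁿ` of `∫_Ω U·V dx − ∫_Ω Φ_•(U) dx` equals `∫_Ω Φ(V) dx` in `[0,∞]`. -/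
theorem iSup_pairing_sub_conj_eq_integral {n : ℕ}
    (Ω : Set (EuclideanSpace ℝ (Fin n))) (hΩm : MeasurableSet Ω)
    (hΩb : Bornology.IsBounded Ω)
    (Φ : EuclideanSpace ℝ (Fin n) → ℝ) (hΦ : IsNFunction Φ)
    (hdiff : Differentiable ℝ Φ)
    (V : EuclideanSpace ℝ (Fin n) → EuclideanSpace ℝ (Fin n))
    (hV : Measurable V) (k : ℝ) (hk : 0 < k)
    (hVk : ∫⁻ x in Ω, ENNReal.ofReal (Φ (k⁻¹ • V x)) < ⊤) :
    (⨆ U : {U : EuclideanSpace ℝ (Fin n) → EuclideanSpace ℝ (Fin n) //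
        Measurable U ∧ ∃ C : ℝ, ∀ᵐ x ∂(volume.restrict Ω), ‖U x‖ ≤ C},
      ENNReal.ofReal
        ((∫ x in Ω, ⟪U.1 x, V x⟫) - ∫ x in Ω, youngConjR Φ (U.1 x))) =
      ∫⁻ x in Ω, ENNReal.ofReal (Φ (V x)) := by
  classical
  haveI hμfin : IsFiniteMeasure (volume.restrict Ω) :=
    ⟨by rw [Measure.restrict_apply_univ]; exact hΩb.measure_lt_top⟩
  have hΦc : Continuous Φ := hdiff.continuous
  have hΦVm : Measurable fun x => Φ (V x) := hΦc.measurable.comp hV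
  obtain ⟨R, hR0, hR⟩ := hΦ.exists_superlinear 1
  have hnormle : ∀ x, ‖V x‖ ≤ k * R + k * Φ (k⁻¹ • V x) := by
    intro x
    have hΦn := hΦ.nonneg (k⁻¹ • V x)
    have hnk : ‖k⁻¹ • V x‖ = k⁻¹ * ‖V x‖ := by
      rw [norm_smul, Real.norm_eq_abs, abs_of_pos (inv_pos.2 hk)]
    have hbeta : k * (k⁻¹ * ‖V x‖) = ‖V x‖ := by field_simp
    have hkR : 0 ≤ k * R := by positivity
    rcases le_or_gt ‖k⁻¹ • V x‖ R with h | h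
    · rw [hnk] at h
      have h2 := mul_le_mul_of_nonneg_left h hk.le
      nlinarith
    · have h2 := hR _ h.le
      rw [one_mul, hnk] at h2
      have h3 := mul_le_mul_of_nonneg_left h2 hk.le
      nlinarith
  have hWm : Measurable fun x => Φ (k⁻¹ • V x) := hΦc.measurable.comp (hV.const_smul k⁻¹)
  have hWint : IntegrableOn (fun x => Φ (k⁻¹ • V x)) Ω := by
    have h := integrable_toReal_of_lintegral_ne_top
      (hWm.ennreal_ofReal.aemeasurable (μ := volume.restrict Ω)) hVk.ne
    refine h.congr (Filter.Eventually.of_forall fun x => ?_)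
    exact ENNReal.toReal_ofReal (hΦ.nonneg _)
  have hVint : IntegrableOn V Ω := by
    refine Integrable.mono' ((integrable_const (k * R)).add (hWint.const_mul k))
      hV.aestronglyMeasurable ?_
    exact Filter.Eventually.of_forall hnormle
  have pairing_int : ∀ U : EuclideanSpace ℝ (Fin n) → EuclideanSpace ℝ (Fin n),
      Measurable U → ∀ C : ℝ, (∀ᵐ x ∂(volume.restrict Ω), ‖U x‖ ≤ C) →
      IntegrableOn (fun x => ⟪U x, V x⟫) Ω := by
    intro U hU C hC
    refine Integrable.mono' (hVint.norm.const_mul (max C 0))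
      ((hU.inner hV).aestronglyMeasurable) ?_
    filter_upwards [hC] with x hx
    calc ‖⟪U x, V x⟫‖ ≤ ‖U x‖ * ‖V x‖ := norm_inner_le_norm _ _
      _ ≤ max C 0 * ‖V x‖ :=
        mul_le_mul_of_nonneg_right (hx.trans (le_max_left _ _)) (norm_nonneg _)
  have conj_int : ∀ U : EuclideanSpace ℝ (Fin n) → EuclideanSpace ℝ (Fin n),
      Measurable U → ∀ C : ℝ, (∀ᵐ x ∂(volume.restrict Ω), ‖U x‖ ≤ C) →
      IntegrableOn (fun x => youngConjR Φ (U x)) Ω := by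
    intro U hU C hC
    obtain ⟨B, hB0, hB⟩ := young_bound hΦ (le_max_right C 0)
    refine Integrable.mono' (integrable_const B)
      (((young_continuous hΦ).measurable.comp hU).aestronglyMeasurable) ?_
    filter_upwards [hC] with x hx
    rw [Real.norm_eq_abs, abs_of_nonneg (young_nonneg hΦ _)]
    exact young_le_of_norm_le hΦ hB (hx.trans (le_max_left _ _))
  refine le_antisymm (iSup_le ?_) ?_
  · rintro ⟨U, hUm, C, hC⟩
    by_cases htop : (∫⁻ x in Ω, ENNReal.ofReal (Φ (V x))) = ⊤
    · rw [htop]; exact le_top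
    have hΦVint : IntegrableOn (fun x => Φ (V x)) Ω := by
      have h := integrable_toReal_of_lintegral_ne_top
        (hΦVm.ennreal_ofReal.aemeasurable (μ := volume.restrict Ω)) htop
      refine h.congr (Filter.Eventually.of_forall fun x => ?_)
      exact ENNReal.toReal_ofReal (hΦ.nonneg _)
    have hui := pairing_int U hUm C hC
    have hci := conj_int U hUm C hC
    have hsub : (∫ x in Ω, ⟪U x, V x⟫) - ∫ x in Ω, youngConjR Φ (U x)
        = ∫ x in Ω, (⟪U x, V x⟫ - youngConjR Φ (U x)) := (integral_sub hui hci).symm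
    rw [hsub]
    have hmono : (∫ x in Ω, (⟪U x, V x⟫ - youngConjR Φ (U x))) ≤ ∫ x in Ω, Φ (V x) := by
      refine integral_mono_ae (hui.sub hci) hΦVint (Filter.Eventually.of_forall fun x => ?_)
      have h := le_young hΦ (V x) (U x)
      rw [real_inner_comm] at h
      simp only
      linarith
    calc ENNReal.ofReal (∫ x in Ω, (⟪U x, V x⟫ - youngConjR Φ (U x)))
        ≤ ENNReal.ofReal (∫ x in Ω, Φ (V x)) := ENNReal.ofReal_le_ofReal hmono
      _ = ∫⁻ x in Ω, ENNReal.ofReal (Φ (V x)) :=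
        ofReal_integral_eq_lintegral_ofReal hΦVint
          (Filter.Eventually.of_forall fun x => hΦ.nonneg _)
  · set G : EuclideanSpace ℝ (Fin n) → EuclideanSpace ℝ (Fin n) :=
      fun ξ => (InnerProductSpace.toDual ℝ (EuclideanSpace ℝ (Fin n))).symm (fderiv ℝ Φ ξ)
      with hGdef
    have hGm : Measurable G := grad_meas hdiff
    have hmainle : ∀ m : ℕ,
        (∫⁻ x in Ω, ENNReal.ofReal (if ‖V x‖ ≤ (m:ℝ) then Φ (V x) else 0))
        ≤ (⨆ U : {U : EuclideanSpace ℝ (Fin n) → EuclideanSpace ℝ (Fin n) //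
            Measurable U ∧ ∃ C : ℝ, ∀ᵐ x ∂(volume.restrict Ω), ‖U x‖ ≤ C},
          ENNReal.ofReal
            ((∫ x in Ω, ⟪U.1 x, V x⟫) - ∫ x in Ω, youngConjR Φ (U.1 x))) := by
      intro m
      set Um : EuclideanSpace ℝ (Fin n) → EuclideanSpace ℝ (Fin n) :=
        fun x => if ‖V x‖ ≤ (m:ℝ) then G (V x) else 0 with hUmdef
      have hUmm : Measurable Um :=
        Measurable.ite (measurableSet_le hV.norm measurable_const) (hGm.comp hV)
          measurable_const
      obtain ⟨M, hM0, hM⟩ := grad_bound hΦ hdiff (m : ℝ)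
      have hUmb : ∀ x, ‖Um x‖ ≤ M := by
        intro x
        simp only [hUmdef]
        split_ifs with h
        · exact hM (V x) h
        · simpa using hM0
      refine le_trans ?_ (le_iSup _ ⟨Um, hUmm, M, Filter.Eventually.of_forall hUmb⟩)
      have hpt : ∀ x, ⟪Um x, V x⟫ - youngConjR Φ (Um x)
          = (if ‖V x‖ ≤ (m:ℝ) then Φ (V x) else 0) := by
        intro x
        simp only [hUmdef]
        split_ifs with h
        · have he : youngConjR Φ (G (V x)) = ⟪V x, G (V x)⟫ - Φ (V x) :=
            young_eq hΦ hdiff (V x)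
          rw [he, real_inner_comm]
          ring
        · rw [young_zero hΦ]
          simp
      have hFi : IntegrableOn (fun x => if ‖V x‖ ≤ (m:ℝ) then Φ (V x) else 0) Ω := by
        obtain ⟨CB, hCB⟩ := (isCompact_closedBall (0 : EuclideanSpace ℝ (Fin n))
          (m : ℝ)).exists_bound_of_continuousOn hΦc.continuousOn
        refine Integrable.mono' (integrable_const CB)
          ((Measurable.ite (measurableSet_le hV.norm measurable_const) hΦVm
            measurable_const).aestronglyMeasurable) ?_
        refine Filter.Eventually.of_forall fun x => ?_
        show ‖if ‖V x‖ ≤ (m:ℝ) then Φ (V x) else 0‖ ≤ CB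
        rw [Real.norm_eq_abs]
        split_ifs with h
        · exact (Real.norm_eq_abs _ ▸ hCB (V x) (by rwa [Metric.mem_closedBall, dist_zero_right]) : |Φ (V x)| ≤ CB)
        · have : (0:EuclideanSpace ℝ (Fin n)) ∈ Metric.closedBall
            (0 : EuclideanSpace ℝ (Fin n)) (m : ℝ) := by
            simp [Metric.mem_closedBall]
          simpa using (norm_nonneg (Φ 0)).trans (hCB 0 this)
      have hpair := pairing_int Um hUmm M (Filter.Eventually.of_forall hUmb)
      have hconj := conj_int Um hUmm M (Filter.Eventually.of_forall hUmb)
      have heq2 : (∫ x in Ω, ⟪Um x, V x⟫) - ∫ x in Ω, youngConjR Φ (Um x)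
          = ∫ x in Ω, (if ‖V x‖ ≤ (m:ℝ) then Φ (V x) else 0) := by
        rw [← integral_sub hpair hconj]
        exact integral_congr_ae (Filter.Eventually.of_forall hpt)
      rw [heq2, ofReal_integral_eq_lintegral_ofReal hFi
        (Filter.Eventually.of_forall fun x => by
          simp only; split_ifs; exacts [hΦ.nonneg _, le_rfl])]
    have hmeas : ∀ m : ℕ,
        Measurable fun x => ENNReal.ofReal (if ‖V x‖ ≤ (m:ℝ) then Φ (V x) else 0) :=
      fun m => (Measurable.ite (measurableSet_le hV.norm measurable_const) hΦVm
        measurable_const).ennreal_ofReal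
    have hmono : Monotone fun (m : ℕ) (x : EuclideanSpace ℝ (Fin n)) =>
        ENNReal.ofReal (if ‖V x‖ ≤ (m:ℝ) then Φ (V x) else 0) := by
      intro m m' hmm'
      refine fun x => ENNReal.ofReal_le_ofReal ?_
      show (if ‖V x‖ ≤ (m:ℝ) then Φ (V x) else 0) ≤ (if ‖V x‖ ≤ (m':ℝ) then Φ (V x) else 0)
      split_ifs with h1 h2
      · exact le_rfl
      · exact absurd (h1.trans (Nat.cast_le.2 hmm')) h2
      · exact hΦ.nonneg _
      · exact le_rfl
    have hsup : ∀ x, (⨆ m : ℕ, ENNReal.ofReal (if ‖V x‖ ≤ (m:ℝ) then Φ (V x) else 0))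
        = ENNReal.ofReal (Φ (V x)) := by
      intro x
      refine le_antisymm (iSup_le fun m => ENNReal.ofReal_le_ofReal ?_) ?_
      · split_ifs
        exacts [le_rfl, hΦ.nonneg _]
      · refine le_iSup_of_le ⌈‖V x‖⌉₊ (le_of_eq ?_)
        rw [if_pos (Nat.le_ceil _)]
    calc (∫⁻ x in Ω, ENNReal.ofReal (Φ (V x)))
        = ∫⁻ x in Ω, ⨆ m : ℕ, ENNReal.ofReal (if ‖V x‖ ≤ (m:ℝ) then Φ (V x) else 0) :=
          lintegral_congr fun x => (hsup x).symm
      _ = ⨆ m : ℕ, ∫⁻ x in Ω, ENNReal.ofReal (if ‖V x‖ ≤ (m:ℝ) then Φ (V x) else 0) :=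
          lintegral_iSup hmeas hmono
      _ ≤ _ := iSup_le hmainle
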